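/- Let N ≥ 1, E a real normed vector space, f : E → E → E, and τ : Fin N → ℝ. Suppose x : Fin N → ℝ → E is a solution of the inhomogeneous ring system: each x j is differentiable and deriv (x j) t = f (x j t) (x (j+1) (t − τ j)) for all t ∈ ℝ (indices modulo N). Then there exist shifts η : Fin N → ℝ such that the functions y j t := x j (t + η j) solve the homogeneous ring system with the single delay τ̄ = (∑_k τ k) / N, i.e. deriv (y j) t = f (y j t) (y (j+1) (t − τ̄)) for all j and all t ∈ ℝ. -/

import Mathlib

open Fin.NatCast

/-- **Reduction of an inhomogeneous unidirectional ring to a homogeneous one.**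
If `x` solves the ring system `ẋ_j(t) = f(x_j(t), x_{j+1}(t − τ_j))` with
inhomogeneous delays, then there exist time shifts `η` such that
`y_j(t) = x_j(t + η_j)` solves the ring system with the single (average) delay
`τ̄ = (∑ τ_k) / N`. -/
theorem ring_reduction_to_mean_delay (N : ℕ) [NeZero N]
    {E : Type*} [NormedAddCommGroup E] [NormedSpace ℝ E]
    (f : E → E → E) (τ : Fin N → ℝ) (x : Fin N → ℝ → E)
    (hdiff : ∀ j, Differentiable ℝ (x j))
    (hsol : ∀ j, ∀ t : ℝ, deriv (x j) t = f (x j t) (x (j + 1) (t - τ j))) :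
    ∃ η : Fin N → ℝ, ∀ y : Fin N → ℝ → E,
      (∀ j, ∀ t : ℝ, y j t = x j (t + η j)) →
        ∀ j, ∀ t : ℝ,
          deriv (y j) t = f (y j t) (y (j + 1) (t - (∑ k : Fin N, τ k) / N)) := by
  obtain ⟨n, rfl⟩ := Nat.exists_eq_succ_of_ne_zero (NeZero.ne N)
  set τb : ℝ := (∑ k : Fin (n + 1), τ k) / (n + 1 : ℕ) with hτb
  refine ⟨fun j => ∑ k ∈ Finset.range j.val, (τb - τ (k : Fin (n + 1))), fun y hy => ?_⟩
  set η : Fin (n + 1) → ℝ := fun j => ∑ k ∈ Finset.range j.val, (τb - τ (k : Fin (n + 1)))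
    with hη
  have key : ∀ j : Fin (n + 1), η (j + 1) = η j + (τb - τ j) := by
    intro j
    by_cases hlast : j = Fin.last n
    · subst hlast
      have h1 : Fin.last n + 1 = 0 := Fin.last_add_one n
      have h2 : η 0 = 0 := by simp [hη]
      rw [h1, h2]
      have hτlast : τ (Fin.last n) = τ ((n : ℕ) : Fin (n + 1)) := by
        congr 1
        ext
        simp [Fin.val_last, Nat.mod_eq_of_lt (Nat.lt_succ_self n)]
      have hsum : ∑ k ∈ Finset.range (n + 1), (τb - τ (k : Fin (n + 1))) = 0 := by
        rw [Finset.sum_sub_distrib, Finset.sum_const, Finset.card_range]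
        have h3 : ∑ k ∈ Finset.range (n + 1), τ (k : Fin (n + 1)) =
            ∑ k : Fin (n + 1), τ k := by
          rw [← Fin.sum_univ_eq_sum_range (fun k => τ (k : Fin (n + 1)))]
          exact Finset.sum_congr rfl fun i _ => by rw [Fin.cast_val_eq_self]
        rw [h3, hτb]
        rw [nsmul_eq_mul]
        field_simp
        simp
      have : η (Fin.last n) + (τb - τ (Fin.last n)) =
          ∑ k ∈ Finset.range (n + 1), (τb - τ (k : Fin (n + 1))) := by
        rw [Finset.sum_range_succ, hη]
        simp [Fin.val_last, hτlast]
      rw [this, hsum]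
    · have hlt : j.val + 1 < n + 1 := by
        have := Fin.val_lt_last hlast
        omega
      have hval : (j + 1 : Fin (n + 1)).val = j.val + 1 := by
        rw [Fin.add_def]
        simp [Nat.mod_eq_of_lt hlt, Nat.mod_eq_of_lt (by omega : 1 < n + 1)]
      rw [hη]
      simp only [hval, Finset.sum_range_succ, Fin.cast_val_eq_self]
  intro j t
  have hyj : y j = fun s => x j (s + η j) := funext (hy j)
  have hd : deriv (y j) t = deriv (x j) (t + η j) := by
    rw [hyj]; exact deriv_comp_add_const (x j) (η j) t
  rw [hd, hsol j (t + η j), hy j t, hy (j + 1)]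
  congr 1
  have := key j
  congr 1
  linarith
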